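/- Let g and h be integers with g ≥ h ≥ 2, let n be a positive integer and let 0 < p < 1. Let S be a random subset of {1,…,n} in which each element of {1,…,n} is included independently with probability p. Then the expected number of (h,g)-bad elements of S satisfies E[|S_bad|] ≤ n^{g+h-1} p^{gh}. -/

import Mathlib

open MeasureTheory

/-- `m` is `(h,g)`-bad for `S`: there are integers `m_1 < ⋯ < m_{g-1} < m` (described here by
a strictly monotone `M : Fin g → ℤ` with largest value `m`) and `0 < ℓ_1 < ⋯ < ℓ_{h-1}`
(described by a strictly monotone `L : Fin h → ℤ` with smallest value `0`) such that the `gh`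
sums `M i + L j` are pairwise distinct elements of `S`. -/
def IsBad (h g : ℕ) (S : Finset ℤ) (m : ℤ) : Prop :=
  ∃ (M : Fin g → ℤ) (L : Fin h → ℤ),
    StrictMono M ∧ StrictMono L ∧
    (∀ i, M i ≤ m) ∧ (∃ i, M i = m) ∧
    (∀ j, 0 ≤ L j) ∧ (∃ j, L j = 0) ∧
    Function.Injective (fun p : Fin g × Fin h => M p.1 + L p.2) ∧
    ∀ (i : Fin g) (j : Fin h), M i + L j ∈ S

open Classical in
/-- The set of `(h,g)`-bad elements of `S`. -/
noncomputable def badSet (h g : ℕ) (S : Finset ℤ) : Finset ℤ :=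
  S.filter (fun m => IsBad h g S m)

open Classical in
/-- The random subset of `{1, …, n}` determined by a sample `ω : Fin n → Bool` of `n`
independent Bernoulli variables: `i + 1` is included iff `ω i = true`. -/
noncomputable def randomSubset (n : ℕ) (ω : Fin n → Bool) : Finset ℤ :=
  (Finset.univ.filter (fun i : Fin n => ω i = true)).image (fun i : Fin n => ((i : ℕ) : ℤ) + 1)

section Aux

/-- Index of `a ∈ {1,…,n}` in `Fin n`. -/
def idxF (n : ℕ) (hn : 0 < n) (a : ℤ) : Fin n := ⟨(a - 1).toNat % n, Nat.mod_lt _ hn⟩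

lemma idxF_injOn (n : ℕ) (hn : 0 < n) :
    Set.InjOn (idxF n hn) (Finset.Icc (1:ℤ) n) := by
  intro a ha b hb hab
  simp only [Finset.coe_Icc, Set.mem_Icc] at ha hb
  have h1 : (a - 1).toNat % n = (b - 1).toNat % n := congrArg Fin.val hab
  have h2 : (a - 1).toNat < n := by omega
  have h3 : (b - 1).toNat < n := by omega
  rw [Nat.mod_eq_of_lt h2, Nat.mod_eq_of_lt h3] at h1
  omega

lemma mem_randomSubset_true {n : ℕ} (hn : 0 < n) {ω : Fin n → Bool} {a : ℤ}
    (ha : a ∈ randomSubset n ω) : ω (idxF n hn a) = true := by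
  simp only [randomSubset, Finset.mem_image, Finset.mem_filter, Finset.mem_univ, true_and] at ha
  obtain ⟨i, hi, rfl⟩ := ha
  have hlt : (i : ℕ) < n := i.isLt
  have hidx : idxF n hn (((i:ℕ):ℤ) + 1) = i := by
    apply Fin.ext
    simp only [idxF, add_sub_cancel_right, Int.toNat_natCast]
    exact Nat.mod_eq_of_lt hlt
  rw [hidx]; exact hi

lemma randomSubset_subset {n : ℕ} (ω : Fin n → Bool) :
    randomSubset n ω ⊆ Finset.Icc 1 (n:ℤ) := by
  intro a ha
  simp only [randomSubset, Finset.mem_image, Finset.mem_filter, Finset.mem_univ, true_and] at ha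
  obtain ⟨i, -, rfl⟩ := ha
  have := i.isLt
  simp only [Finset.mem_Icc]
  omega

open Classical in
/-- A chosen witness for a bad element. -/
noncomputable def wit (h g : ℕ) (S : Finset ℤ) (m : ℤ) : (Fin g → ℤ) × (Fin h → ℤ) :=
  if hm : IsBad h g S m then ⟨hm.choose, hm.choose_spec.choose⟩ else ⟨0, 0⟩

lemma wit_spec {h g : ℕ} {S : Finset ℤ} {m : ℤ} (hm : IsBad h g S m) :
    StrictMono (wit h g S m).1 ∧ StrictMono (wit h g S m).2 ∧
    (∀ i, (wit h g S m).1 i ≤ m) ∧ (∃ i, (wit h g S m).1 i = m) ∧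
    (∀ j, 0 ≤ (wit h g S m).2 j) ∧ (∃ j, (wit h g S m).2 j = 0) ∧
    Function.Injective
      (fun q : Fin g × Fin h => (wit h g S m).1 q.1 + (wit h g S m).2 q.2) ∧
    ∀ i j, (wit h g S m).1 i + (wit h g S m).2 j ∈ S := by
  classical
  rw [wit]
  rw [dif_pos hm]
  exact hm.choose_spec.choose_spec

open Classical in
/-- The finite set of possible witness tuples. -/
noncomputable def tupleSet (g h n : ℕ) (hh : 0 < h) :
    Finset ((Fin g → ℤ) × (Fin h → ℤ)) :=
  (Fintype.piFinset (fun _ : Fin g => Finset.Icc (1:ℤ) n) ×ˢ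
    Fintype.piFinset (fun j : Fin h =>
      if j = ⟨0, hh⟩ then ({0} : Finset ℤ) else Finset.Icc 1 ((n:ℤ) - 1))).filter
    (fun t => StrictMono t.1 ∧ StrictMono t.2 ∧
      Function.Injective (fun q : Fin g × Fin h => t.1 q.1 + t.2 q.2) ∧
      ∀ q : Fin g × Fin h, t.1 q.1 + t.2 q.2 ∈ Finset.Icc (1:ℤ) n)

/-- The indices of the `gh` sums of a tuple. -/
noncomputable def sumIdx (g h n : ℕ) (hn : 0 < n) (t : (Fin g → ℤ) × (Fin h → ℤ)) :
    Finset (Fin n) :=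
  Finset.image (fun q : Fin g × Fin h => idxF n hn (t.1 q.1 + t.2 q.2)) Finset.univ

/-- The event that all `gh` sums of a tuple belong to the random set. -/
noncomputable def ev (g h n : ℕ) (hn : 0 < n) (t : (Fin g → ℤ) × (Fin h → ℤ)) :
    Set (Fin n → Bool) :=
  Set.univ.pi (fun i => if i ∈ sumIdx g h n hn t then ({true} : Set Bool) else Set.univ)

lemma mem_ev {g h n : ℕ} {hn : 0 < n} {t : (Fin g → ℤ) × (Fin h → ℤ)}
    {ω : Fin n → Bool} :
    ω ∈ ev g h n hn t ↔ ∀ q : Fin g × Fin h, ω (idxF n hn (t.1 q.1 + t.2 q.2)) = true := by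
  rw [ev, Set.mem_univ_pi]
  constructor
  · intro hω q
    have := hω (idxF n hn (t.1 q.1 + t.2 q.2))
    have hmem : idxF n hn (t.1 q.1 + t.2 q.2) ∈ sumIdx g h n hn t := by
      simp only [sumIdx, Finset.mem_image, Finset.mem_univ, true_and]
      exact ⟨q, rfl⟩
    rw [if_pos hmem] at this
    simpa using this
  · intro hω i
    by_cases hi : i ∈ sumIdx g h n hn t
    · rw [if_pos hi]
      simp only [sumIdx, Finset.mem_image, Finset.mem_univ, true_and] at hi
      obtain ⟨q, rfl⟩ := hi
      simpa using hω q
    · rw [if_neg hi]; trivial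

lemma card_tupleSet_le (g h n : ℕ) (hh : 0 < h) :
    (tupleSet g h n hh).card ≤ n ^ (g + h - 1) := by
  classical
  set z : Fin h := ⟨0, hh⟩ with hz
  have h1 : (tupleSet g h n hh).card ≤
      ((Fintype.piFinset (fun _ : Fin g => Finset.Icc (1:ℤ) n)) ×ˢ
        Fintype.piFinset (fun j : Fin h =>
          if j = z then ({0} : Finset ℤ) else Finset.Icc 1 ((n:ℤ) - 1))).card := by
    rw [tupleSet]
    exact Finset.card_filter_le _ _
  rw [Finset.card_product, Fintype.card_piFinset, Fintype.card_piFinset] at h1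
  have cg : ∀ i : Fin g, (Finset.Icc (1:ℤ) (n:ℤ)).card = n := by
    intro i
    rw [Int.card_Icc]
    omega
  rw [Finset.prod_congr rfl (fun i _ => cg i), Finset.prod_const, Finset.card_univ,
    Fintype.card_fin] at h1
  have h2 : ∏ j : Fin h, ((if j = z then ({0} : Finset ℤ)
      else Finset.Icc 1 ((n:ℤ) - 1))).card ≤ ∏ j : Fin h, (if j = z then 1 else n) := by
    apply Finset.prod_le_prod'
    intro j _
    by_cases hj : j = z
    · simp [hj]
    · rw [if_neg hj, if_neg hj, Int.card_Icc]
      omega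
  have h3 : ∏ j : Fin h, (if j = z then 1 else n) = n ^ (h - 1) := by
    rw [← Finset.mul_prod_erase Finset.univ _ (Finset.mem_univ z), if_pos rfl, one_mul,
      Finset.prod_congr rfl (fun j hj => if_neg (Finset.ne_of_mem_erase hj)),
      Finset.prod_const, Finset.card_erase_of_mem (Finset.mem_univ z), Finset.card_univ,
      Fintype.card_fin]
  calc (tupleSet g h n hh).card ≤ n ^ g * ∏ j : Fin h, ((if j = z then ({0} : Finset ℤ)
        else Finset.Icc 1 ((n:ℤ) - 1))).card := h1
    _ ≤ n ^ g * n ^ (h - 1) := Nat.mul_le_mul_left _ (h2.trans h3.le)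
    _ = n ^ (g + h - 1) := by
        rw [← pow_add]
        congr 1
        omega

open Classical in
lemma card_badSet_le {g h n : ℕ} (hgh : h ≤ g) (hh : 2 ≤ h) (hn : 0 < n)
    (ω : Fin n → Bool) :
    (badSet h g (randomSubset n ω)).card ≤
      ((tupleSet g h n (by omega)).filter (fun t => ω ∈ ev g h n hn t)).card := by
  classical
  set S := randomSubset n ω with hS
  have hg : 0 < g := by omega
  set z : Fin h := ⟨0, by omega⟩ with hzdef
  set gz : Fin g := ⟨0, hg⟩ with hgzdef
  set top : Fin g := ⟨g - 1, by omega⟩ with htopdef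
  -- the top value of the witness recovers `m`
  have htop : ∀ m, IsBad h g S m → (wit h g S m).1 top = m := by
    intro m hm
    obtain ⟨hM, hL, hMle, ⟨i0, hi0⟩, hLnn, ⟨j0, hj0⟩, hinj, hmem⟩ := wit_spec hm
    refine le_antisymm (hMle top) ?_
    have hle : i0 ≤ top := by
      rw [Fin.le_def]
      have := i0.isLt
      simp only [htopdef]
      omega
    calc m = (wit h g S m).1 i0 := hi0.symm
      _ ≤ (wit h g S m).1 top := hM.monotone hle
  apply Finset.card_le_card_of_injOn (fun m => wit h g S m)
  · intro m hm'
    have hm : IsBad h g S m := (Finset.mem_filter.mp hm').2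
    obtain ⟨hM, hL, hMle, ⟨i0, hi0⟩, hLnn, ⟨j0, hj0⟩, hinj, hmem⟩ := wit_spec hm
    set M := (wit h g S m).1
    set L := (wit h g S m).2
    -- smallest L value is 0
    have hL0 : L z = 0 := by
      refine le_antisymm ?_ (hLnn z)
      have : z ≤ j0 := by
        rw [Fin.le_def]
        simp [hzdef]
      calc L z ≤ L j0 := hL.monotone this
        _ = 0 := hj0
    -- M values lie in [1, n]
    have hMIcc : ∀ i, M i ∈ Finset.Icc (1:ℤ) n := by
      intro i
      have := hmem i j0
      rw [hj0, add_zero] at this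
      exact randomSubset_subset ω this
    -- all sums lie in [1, n]
    have hsum : ∀ (i : Fin g) (j : Fin h), M i + L j ∈ Finset.Icc (1:ℤ) n := by
      intro i j
      exact randomSubset_subset ω (hmem i j)
    rw [Finset.mem_coe, Finset.mem_filter]
    constructor
    · rw [tupleSet, Finset.mem_filter, Finset.mem_product, Fintype.mem_piFinset,
        Fintype.mem_piFinset]
      refine ⟨⟨fun i => hMIcc i, fun j => ?_⟩, hM, hL, hinj, fun q => hsum q.1 q.2⟩
      by_cases hj : j = z
      · rw [if_pos hj, hj]
        show L z ∈ ({0} : Finset ℤ)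
        simp [hL0]
      · rw [if_neg hj, Finset.mem_Icc]
        have h0j : z < j := by
          rw [Fin.lt_def]
          have : (j : ℕ) ≠ 0 := fun hc => hj (Fin.ext (by simp [hzdef, hc]))
          simp only [hzdef]
          omega
        have h1 : 0 < L j := hL0 ▸ hL h0j
        have h2 := hsum gz j
        have h3 := hMIcc gz
        rw [Finset.mem_Icc] at h2 h3
        show 1 ≤ L j ∧ L j ≤ (n:ℤ) - 1
        omega
    · rw [mem_ev]
      intro q
      exact mem_randomSubset_true hn (hmem q.1 q.2)
  · intro m1 hm1 m2 hm2 heq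
    have h1 : IsBad h g S m1 := (Finset.mem_filter.mp hm1).2
    have h2 : IsBad h g S m2 := (Finset.mem_filter.mp hm2).2
    have heq' : wit h g S m1 = wit h g S m2 := heq
    calc m1 = (wit h g S m1).1 top := (htop m1 h1).symm
      _ = (wit h g S m2).1 top := by rw [heq']
      _ = m2 := htop m2 h2

lemma measure_ev {g h n : ℕ} (hn : 0 < n) (hh : 0 < h)
    (q : NNReal) (hq : q ≤ 1)
    {t : (Fin g → ℤ) × (Fin h → ℤ)} (ht : t ∈ tupleSet g h n hh) :
    Measure.pi (fun _ : Fin n => (PMF.bernoulli q hq).toMeasure) (ev g h n hn t)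
      = (q : ENNReal) ^ (g * h) := by
  classical
  rw [tupleSet, Finset.mem_filter] at ht
  obtain ⟨-, -, hinj, hIcc⟩ := ht.2
  have hcard : (sumIdx g h n hn t).card = g * h := by
    rw [sumIdx, Finset.card_image_of_injOn, Finset.card_univ, Fintype.card_prod,
      Fintype.card_fin, Fintype.card_fin]
    intro q1 _ q2 _ he
    exact hinj (idxF_injOn n hn (Finset.mem_coe.mpr (hIcc q1))
      (Finset.mem_coe.mpr (hIcc q2)) he)
  rw [ev, MeasureTheory.Measure.pi_pi]
  have hν : (PMF.bernoulli q hq).toMeasure {true} = (q : ENNReal) := by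
    rw [PMF.toMeasure_apply_singleton _ _ (measurableSet_singleton _)]
    rfl
  calc ∏ i : Fin n, (PMF.bernoulli q hq).toMeasure
        (if i ∈ sumIdx g h n hn t then ({true} : Set Bool) else Set.univ)
      = ∏ i : Fin n, (if i ∈ sumIdx g h n hn t then (q : ENNReal) else 1) := by
        refine Finset.prod_congr rfl fun i _ => ?_
        by_cases hi : i ∈ sumIdx g h n hn t
        · rw [if_pos hi, if_pos hi, hν]
        · rw [if_neg hi, if_neg hi, measure_univ]
    _ = (q : ENNReal) ^ (g * h) := by
        rw [Finset.prod_ite_mem, Finset.univ_inter, Finset.prod_const, hcard]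

end Aux

/-- If `S` is a random subset of `{1, …, n}` where each element is included independently
with probability `p`, then `E[|S_bad|] ≤ n^{g+h-1} p^{gh}`. -/
theorem stmt11 (g h : ℕ) (hgh : h ≤ g) (hh : 2 ≤ h) (n : ℕ) (hn : 0 < n)
    (p : ℝ) (hp0 : 0 < p) (hp1 : p < 1)
    (μ : Measure (Fin n → Bool))
    (hμ : μ = Measure.pi (fun _ : Fin n =>
      (PMF.bernoulli (Real.toNNReal p) (by
        simpa using Real.toNNReal_le_one.mpr hp1.le)).toMeasure)) :
    ∫ ω, ((badSet h g (randomSubset n ω)).card : ℝ) ∂μ ≤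
      (n : ℝ) ^ (g + h - 1) * p ^ (g * h) := by
  classical
  have hhpos : 0 < h := by omega
  have hple : Real.toNNReal p ≤ 1 := by simpa using Real.toNNReal_le_one.mpr hp1.le
  subst hμ
  set T := tupleSet g h n hhpos with hT
  have hmeasE : ∀ t, MeasurableSet (ev g h n hn t) := fun t => (Set.toFinite _).measurableSet
  have key1 : ∀ ω : Fin n → Bool, ((badSet h g (randomSubset n ω)).card : ℝ) ≤
      ∑ t ∈ T, (ev g h n hn t).indicator (fun _ => (1:ℝ)) ω := by
    intro ω
    have h1 := card_badSet_le (g := g) (h := h) hgh hh hn ω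
    have h2 : ((T.filter (fun t => ω ∈ ev g h n hn t)).card : ℝ) =
        ∑ t ∈ T, (ev g h n hn t).indicator (fun _ => (1:ℝ)) ω := by
      rw [Finset.card_filter]
      push_cast
      refine Finset.sum_congr rfl fun t _ => ?_
      by_cases hw : ω ∈ ev g h n hn t
      · rw [if_pos hw, Set.indicator_of_mem hw]
      · rw [if_neg hw, Set.indicator_of_notMem hw]
    calc ((badSet h g (randomSubset n ω)).card : ℝ)
        ≤ ((T.filter (fun t => ω ∈ ev g h n hn t)).card : ℝ) := Nat.cast_le.mpr h1
      _ = _ := h2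
  set ν := (PMF.bernoulli (Real.toNNReal p) hple).toMeasure with hν
  set μ := Measure.pi (fun _ : Fin n => ν) with hμ
  have key2 : ∫ ω, (∑ t ∈ T, (ev g h n hn t).indicator (fun _ => (1:ℝ)) ω) ∂μ
      = ∑ t ∈ T, (μ (ev g h n hn t)).toReal := by
    rw [integral_finset_sum _ (fun t _ => Integrable.of_finite)]
    refine Finset.sum_congr rfl fun t _ => ?_
    rw [integral_indicator_const (1:ℝ) (hmeasE t), smul_eq_mul, mul_one]
    rfl
  have key3 : ∀ t ∈ T, (μ (ev g h n hn t)).toReal = p ^ (g * h) := by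
    intro t ht
    rw [hμ, hν, measure_ev hn hhpos _ hple ht, ENNReal.toReal_pow,
      ENNReal.coe_toReal, Real.coe_toNNReal _ hp0.le]
  calc ∫ ω, ((badSet h g (randomSubset n ω)).card : ℝ) ∂μ
      ≤ ∫ ω, (∑ t ∈ T, (ev g h n hn t).indicator (fun _ => (1:ℝ)) ω) ∂μ :=
        integral_mono Integrable.of_finite Integrable.of_finite key1
    _ = ∑ t ∈ T, (μ (ev g h n hn t)).toReal := key2
    _ = ∑ _t ∈ T, p ^ (g * h) := Finset.sum_congr rfl key3
    _ = (T.card : ℝ) * p ^ (g * h) := by rw [Finset.sum_const, nsmul_eq_mul]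
    _ ≤ (n : ℝ) ^ (g + h - 1) * p ^ (g * h) := by
        apply mul_le_mul_of_nonneg_right _ (pow_nonneg hp0.le _)
        have := card_tupleSet_le g h n hhpos
        calc (T.card : ℝ) ≤ ((n ^ (g + h - 1) : ℕ) : ℝ) := Nat.cast_le.mpr this
          _ = (n : ℝ) ^ (g + h - 1) := by push_cast; ring
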